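/- Let P₀, P₁, Q be positive reals and β a real number with β²·Q < P₀, and set P₀' := P₀ − β²·Q. With α₁ := (1+β)·P₀'/(P₀'+1), the function f from the Gaussian inner bound satisfies the closed form f(α₁, β, P₁) = (1/2)·log(1 + P₁/(P₀ + Q + 2·β·Q + 1)) + (1/2)·log(1 + P₀ − β²·Q). -/

import Mathlib

/-- The rate function `f` from the Gaussian inner bound (Proposition 2.2.3) for the
state-dependent Gaussian MAC with a helper, with `P₀' := P₀ - β^2*Q`. -/
noncomputable def f (P₀ Q α β P : ℝ) : ℝ :=
  (1/2) * Real.log ((P₀ - β^2*Q) * ((P₀ - β^2*Q) + (1+β)^2*Q + P + 1) /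
    ((P₀ - β^2*Q) * Q * (α - 1 - β)^2 + (P₀ - β^2*Q) + α^2*Q))

/-- with `α₁ := (1+β)·P₀'/(P₀'+1)`, the function `f` has the stated
closed form. -/
theorem stmt_0 (P₀ P₁ Q β : ℝ) (hP₀ : 0 < P₀) (hP₁ : 0 < P₁) (hQ : 0 < Q)
    (hβ : β^2*Q < P₀) :
    f P₀ Q ((1+β) * (P₀ - β^2*Q) / ((P₀ - β^2*Q) + 1)) β P₁ =
      (1/2) * Real.log (1 + P₁ / (P₀ + Q + 2*β*Q + 1)) +
      (1/2) * Real.log (1 + P₀ - β^2*Q) := by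
  have hA : (0:ℝ) < P₀ - β^2*Q := by linarith
  have hA1 : (0:ℝ) < P₀ - β^2*Q + 1 := by linarith
  have hD : (0:ℝ) < P₀ + Q + 2*β*Q + 1 := by nlinarith [sq_nonneg (1+β)]
  set α := (1+β) * (P₀ - β^2*Q) / ((P₀ - β^2*Q) + 1) with hα
  have harg : (P₀ - β^2*Q) * ((P₀ - β^2*Q) + (1+β)^2*Q + P₁ + 1) /
      ((P₀ - β^2*Q) * Q * (α - 1 - β)^2 + (P₀ - β^2*Q) + α^2*Q)
      = (1 + P₁ / (P₀ + Q + 2*β*Q + 1)) * (1 + (P₀ - β^2*Q)) := by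
    have h1 : α - 1 - β = -(1+β) / ((P₀ - β^2*Q) + 1) := by
      rw [hα]; field_simp; ring
    have h2 : (P₀ - β^2*Q) * Q * (α - 1 - β)^2 + (P₀ - β^2*Q) + α^2*Q
        = (P₀ - β^2*Q) * ((P₀ - β^2*Q) + 1 + (1+β)^2*Q) / ((P₀ - β^2*Q) + 1) := by
      rw [h1, hα]; field_simp; ring
    rw [h2]
    have hpos : (0:ℝ) < (P₀ - β^2*Q) + 1 + (1+β)^2*Q := by nlinarith [sq_nonneg (1+β)]
    rw [show (P₀ - β^2*Q) + 1 + (1+β)^2*Q = P₀ + Q + 2*β*Q + 1 by ring]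
    rw [one_add_div hD.ne', div_mul_eq_mul_div, div_eq_div_iff (by positivity) hD.ne']
    field_simp
    ring
  have h1 : (0:ℝ) < 1 + P₁ / (P₀ + Q + 2*β*Q + 1) := by positivity
  show (1/2) * Real.log _ = _
  rw [harg, Real.log_mul (ne_of_gt h1) (by linarith)]
  ring_nf
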